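/- Let X and Y be Banach spaces. If u ∈ X ⊗̂_π Y with u = x ⊗ y nonzero, and u also equals x** ⊗ y** for some x** ∈ X**, y** ∈ Y** (as elements of (X ⊗̂_π Y)**), then x** ∈ span{x} and y** ∈ span{y}. -/

import Mathlib

open Filter Topology NormedSpace

noncomputable section

variable (X Y : Type*) [NormedAddCommGroup X] [NormedSpace ℝ X] [CompleteSpace X]
  [NormedAddCommGroup Y] [NormedSpace ℝ Y] [CompleteSpace Y]

/-- The space `B(X × Y)` of bounded bilinear forms on `X × Y`. -/
abbrev Bil := X →L[ℝ] Y →L[ℝ] ℝ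

instance instNormedAddCommGroupBil : NormedAddCommGroup (Bil X Y) := inferInstance

instance instNormedSpaceBil : NormedSpace ℝ (Bil X Y) := inferInstance

/-- The elementary tensor `x ⊗ y`, viewed as a functional on bounded bilinear
forms: `⟨x ⊗ y, B⟩ = B x y`. -/
def elemTensor (x : X) (y : Y) : StrongDual ℝ (Bil X Y) :=
  (ContinuousLinearMap.apply ℝ ℝ y).comp (ContinuousLinearMap.apply ℝ (Y →L[ℝ] ℝ) x)

/-- The projective tensor product `X ⊗̂_π Y`: the closed linear span of the elementary
tensors inside `B(X × Y)*` (the induced dual norm is the projective norm, and the weak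
topology of `X ⊗̂_π Y` is the topology `σ(X ⊗̂_π Y, B(X × Y))` inherited from the
weak-* topology of `B(X × Y)*`). -/
def ptp : Submodule ℝ (StrongDual ℝ (Bil X Y)) :=
  (Submodule.span ℝ {u | ∃ x y, u = elemTensor X Y x y}).topologicalClosure

/-- The approximation property: for every `ε > 0` and every compact set `K` there is
a finite-rank operator `T` with `‖T x - x‖ ≤ ε` on `K`. -/
def HasAP (Z : Type*) [NormedAddCommGroup Z] [NormedSpace ℝ Z] : Prop :=
  ∀ ε : ℝ, 0 < ε → ∀ K : Set Z, IsCompact K →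
    ∃ T : Z →L[ℝ] Z, FiniteDimensional ℝ (LinearMap.range (T : Z →ₗ[ℝ] Z)) ∧
      ∀ x ∈ K, ‖T x - x‖ ≤ ε

/-- The tensor `x** ⊗ y**` of elements of the biduals, as an element of
`(X ⊗̂_π Y)** = B(X × Y)*`, acting by `⟨x** ⊗ y**, B⟩ = x**(x ↦ y**(B x))`. -/
def biElemTensor (x : StrongDual ℝ (StrongDual ℝ X)) (y : StrongDual ℝ (StrongDual ℝ Y)) :
    StrongDual ℝ (Bil X Y) :=
  x.comp (ContinuousLinearMap.compL ℝ X (Y →L[ℝ] ℝ) ℝ y)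

/-- if a nonzero `u = x ⊗ y ∈ X ⊗̂_π Y` also equals `x** ⊗ y**` as an
element of `(X ⊗̂_π Y)**`, then `x** ∈ span{x}` and `y** ∈ span{y}` (under the
canonical embeddings into the biduals). -/
theorem bidual_tensor_eq_span (x : X) (y : Y)
    (x' : StrongDual ℝ (StrongDual ℝ X)) (y' : StrongDual ℝ (StrongDual ℝ Y))
    (hne : elemTensor X Y x y ≠ 0)
    (heq : elemTensor X Y x y = biElemTensor X Y x' y') :
    x' ∈ Submodule.span ℝ {NormedSpace.inclusionInDoubleDual ℝ X x} ∧
    y' ∈ Submodule.span ℝ {NormedSpace.inclusionInDoubleDual ℝ Y y} := by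

  have key : ∀ B : Bil X Y, B x y = x' ((ContinuousLinearMap.compL ℝ X (Y →L[ℝ] ℝ) ℝ y') B) := by
    intro B
    have := ContinuousLinearMap.ext_iff.mp heq B
    simpa [elemTensor, biElemTensor] using this
  have key2 : ∀ (f : X →L[ℝ] ℝ) (g : Y →L[ℝ] ℝ), f x * g y = y' g * x' f := by
    intro f g
    have h1 := key (f.smulRight g)
    have h2 : (ContinuousLinearMap.compL ℝ X (Y →L[ℝ] ℝ) ℝ y') (f.smulRight g) = y' g • f := by
      ext z
      simp [mul_comm]
    rw [h2] at h1
    simpa [smul_eq_mul] using h1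
  have hx : x ≠ 0 := by
    rintro rfl
    apply hne
    ext B
    simp [elemTensor]
  have hy : y ≠ 0 := by
    rintro rfl
    apply hne
    ext B
    simp [elemTensor]
  obtain ⟨f0, _, hf0⟩ := exists_dual_vector ℝ x (norm_ne_zero_iff.mpr hx)
  obtain ⟨g0, _, hg0⟩ := exists_dual_vector ℝ y (norm_ne_zero_iff.mpr hy)
  have hf0x : f0 x = ‖x‖ := by exact_mod_cast hf0
  have hg0y : g0 y = ‖y‖ := by exact_mod_cast hg0
  have hnz : y' g0 * x' f0 ≠ 0 := by
    rw [← key2 f0 g0, hf0x, hg0y]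
    exact mul_ne_zero (norm_ne_zero_iff.mpr hx) (norm_ne_zero_iff.mpr hy)
  have hy'g0 : y' g0 ≠ 0 := fun h => hnz (by rw [h, zero_mul])
  have hx'f0 : x' f0 ≠ 0 := fun h => hnz (by rw [h, mul_zero])
  constructor
  · rw [Submodule.mem_span_singleton]
    refine ⟨(y' g0)⁻¹ * ‖y‖, ?_⟩
    ext f
    have := key2 f g0
    rw [hg0y] at this
    simp only [ContinuousLinearMap.smul_apply, smul_eq_mul, NormedSpace.dual_def]
    field_simp
    rw [mul_comm ‖y‖]
    linarith [this]
  · rw [Submodule.mem_span_singleton]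
    refine ⟨(x' f0)⁻¹ * ‖x‖, ?_⟩
    ext g
    have := key2 f0 g
    rw [hf0x] at this
    simp only [ContinuousLinearMap.smul_apply, smul_eq_mul, NormedSpace.dual_def]
    field_simp
    rw [mul_comm (x' f0)]
    linarith [this]
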